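/- Let Σ = VDVᵀ be a p×p positive semidefinite matrix, where V is a p×d real matrix with VᵀV = I_d and D is a d×d diagonal matrix with nonnegative entries. For a subset S of {1,...,p}, let J_S be the p×p diagonal matrix with (J_S)_{ii} = 1 if i ∈ S and 0 otherwise, and let Σ_S = J_S Σ J_S. Then ‖Σ − Σ_S‖_F ≤ 2‖D‖₂ ‖J_S V − V‖_F, where ‖D‖₂ is the spectral norm of D. -/

import Mathlib

open Matrix

/-- Frobenius norm of a real matrix: `‖M‖_F = (tr (M Mᵀ))^{1/2}`. -/
noncomputable def frobNorm {m n : Type*} [Fintype m] [Fintype n]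
    (M : Matrix m n ℝ) : ℝ :=
  Real.sqrt (Matrix.trace (M * Mᵀ))

/-- Spectral norm of a real matrix: the supremum of `‖Av‖₂` over Euclidean unit vectors `v`. -/
noncomputable def specNorm {m n : Type*} [Fintype m] [Fintype n]
    (A : Matrix m n ℝ) : ℝ :=
  sSup ((fun v : n → ℝ => Real.sqrt (∑ i, (A.mulVec v i) ^ 2)) ''
    {v | Real.sqrt (∑ j, (v j) ^ 2) = 1})

/-- The diagonal indicator matrix `J_S` of a subset `S ⊆ {1,...,p}`. -/
def indicatorMatrix {p : ℕ} (S : Finset (Fin p)) : Matrix (Fin p) (Fin p) ℝ :=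
  Matrix.diagonal fun i => if i ∈ S then 1 else 0

lemma frobNorm_eq_sum {m n : Type*} [Fintype m] [Fintype n] (M : Matrix m n ℝ) :
    frobNorm M = Real.sqrt (∑ i, ∑ j, (M i j) ^ 2) := by
  unfold frobNorm
  congr 1
  simp [Matrix.trace, Matrix.mul_apply, Matrix.diag, sq]

lemma frobNorm_nonneg {m n : Type*} [Fintype m] [Fintype n] (M : Matrix m n ℝ) :
    0 ≤ frobNorm M := Real.sqrt_nonneg _

lemma frobNorm_add_le {m n : Type*} [Fintype m] [Fintype n] (X Y : Matrix m n ℝ) :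
    frobNorm (X + Y) ≤ frobNorm X + frobNorm Y := by
  have h : ∀ M : Matrix m n ℝ,
      frobNorm M = ‖(WithLp.equiv 2 ((m × n) → ℝ)).symm (fun q => M q.1 q.2)‖ := by
    intro M
    rw [frobNorm_eq_sum, EuclideanSpace.norm_eq]
    simp [Fintype.sum_prod_type, Real.norm_eq_abs, sq_abs]
  rw [h, h, h]
  have he : (WithLp.equiv 2 ((m × n) → ℝ)).symm (fun q => (X + Y) q.1 q.2)
      = (WithLp.equiv 2 ((m × n) → ℝ)).symm (fun q => X q.1 q.2)
        + (WithLp.equiv 2 ((m × n) → ℝ)).symm (fun q => Y q.1 q.2) := by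
    ext q
    simp [Matrix.add_apply]
  rw [he]
  exact norm_add_le _ _

lemma frobNorm_neg {m n : Type*} [Fintype m] [Fintype n] (M : Matrix m n ℝ) :
    frobNorm (-M) = frobNorm M := by
  rw [frobNorm_eq_sum, frobNorm_eq_sum]
  simp

lemma frobNorm_transpose {m n : Type*} [Fintype m] [Fintype n] (M : Matrix m n ℝ) :
    frobNorm Mᵀ = frobNorm M := by
  rw [frobNorm_eq_sum, frobNorm_eq_sum, Finset.sum_comm]
  simp

lemma frobNorm_mul_orthT {m p d : ℕ} (M : Matrix (Fin m) (Fin d) ℝ)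
    (V : Matrix (Fin p) (Fin d) ℝ) (hV : Vᵀ * V = 1) :
    frobNorm (M * Vᵀ) = frobNorm M := by
  unfold frobNorm
  congr 1
  rw [Matrix.transpose_mul, Matrix.transpose_transpose]
  rw [show M * Vᵀ * (V * Mᵀ) = M * (Vᵀ * V) * Mᵀ by simp only [Matrix.mul_assoc], hV, Matrix.mul_one]

lemma frobNorm_orth_mul {m p d : ℕ} (M : Matrix (Fin d) (Fin m) ℝ)
    (V : Matrix (Fin p) (Fin d) ℝ) (hV : Vᵀ * V = 1) :
    frobNorm (V * M) = frobNorm M := by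
  unfold frobNorm
  congr 1
  rw [Matrix.transpose_mul]
  rw [show V * M * (Mᵀ * Vᵀ) = V * (M * Mᵀ) * Vᵀ by simp only [Matrix.mul_assoc]]
  rw [Matrix.trace_mul_comm, ← Matrix.mul_assoc, hV, Matrix.one_mul]

lemma frobNorm_indicator_mul_le {p m : ℕ} (S : Finset (Fin p)) (M : Matrix (Fin p) (Fin m) ℝ) :
    frobNorm (indicatorMatrix S * M) ≤ frobNorm M := by
  rw [frobNorm_eq_sum, frobNorm_eq_sum]
  apply Real.sqrt_le_sqrt
  apply Finset.sum_le_sum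
  intro i _
  apply Finset.sum_le_sum
  intro j _
  rw [indicatorMatrix, Matrix.diagonal_mul]
  split_ifs with h
  · simp
  · simpa using sq_nonneg (M i j)

lemma specNorm_bddAbove {d : ℕ} (dvec : Fin d → ℝ) :
    BddAbove ((fun v : Fin d → ℝ =>
      Real.sqrt (∑ i, ((Matrix.diagonal dvec).mulVec v i) ^ 2)) ''
      {v | Real.sqrt (∑ j, (v j) ^ 2) = 1}) := by
  refine ⟨Real.sqrt (∑ j, (dvec j) ^ 2), ?_⟩
  rintro x ⟨v, hv, rfl⟩
  have hsum : (∑ j, (v j) ^ 2) = 1 := by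
    have h0 : 0 ≤ ∑ j, (v j) ^ 2 := Finset.sum_nonneg fun j _ => sq_nonneg _
    have := hv
    rwa [Set.mem_setOf_eq, Real.sqrt_eq_one] at this
  apply Real.sqrt_le_sqrt
  apply Finset.sum_le_sum
  intro i _
  have hmv : (Matrix.diagonal dvec).mulVec v i = dvec i * v i := by
    simp [Matrix.mulVec, diagonal_dotProduct]
  rw [hmv, mul_pow]
  have hvi : (v i) ^ 2 ≤ 1 := by
    rw [← hsum]
    exact Finset.single_le_sum (fun j _ => sq_nonneg (v j)) (Finset.mem_univ i)
  nlinarith [sq_nonneg (dvec i), sq_nonneg (v i)]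

lemma le_specNorm_diagonal {d : ℕ} (dvec : Fin d → ℝ) (hdvec : ∀ i, 0 ≤ dvec i) (j : Fin d) :
    dvec j ≤ specNorm (Matrix.diagonal dvec) := by
  unfold specNorm
  set v : Fin d → ℝ := fun i => if i = j then 1 else 0 with hv
  have hvmem : v ∈ {v : Fin d → ℝ | Real.sqrt (∑ j, (v j) ^ 2) = 1} := by
    simp only [Set.mem_setOf_eq, hv]
    rw [show (∑ i, ((if i = j then (1:ℝ) else 0)) ^ 2) = 1 by
      rw [Finset.sum_eq_single j] <;> simp +contextual]
    exact Real.sqrt_one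
  have hval : Real.sqrt (∑ i, ((Matrix.diagonal dvec).mulVec v i) ^ 2) = dvec j := by
    have : ∀ i, (Matrix.diagonal dvec).mulVec v i = dvec i * v i := by
      intro i; simp [Matrix.mulVec, diagonal_dotProduct]
    simp only [this]; simp only [hv]
    rw [show (∑ i, (dvec i * (if i = j then (1:ℝ) else 0)) ^ 2) = (dvec j)^2 by
      rw [Finset.sum_eq_single j] <;> simp +contextual]
    exact Real.sqrt_sq (hdvec j)
  calc dvec j = Real.sqrt (∑ i, ((Matrix.diagonal dvec).mulVec v i) ^ 2) := hval.symm
    _ ≤ _ := le_csSup (specNorm_bddAbove dvec) ⟨v, hvmem, rfl⟩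

lemma frobNorm_mul_diagonal_le {p d : ℕ} (A : Matrix (Fin p) (Fin d) ℝ)
    (dvec : Fin d → ℝ) (hdvec : ∀ i, 0 ≤ dvec i) :
    frobNorm (A * Matrix.diagonal dvec)
      ≤ specNorm (Matrix.diagonal dvec) * frobNorm A := by
  set s := specNorm (Matrix.diagonal dvec)
  rcases isEmpty_or_nonempty (Fin d) with hd | hd
  · have h1 : frobNorm (A * Matrix.diagonal dvec) = 0 := by
      rw [frobNorm_eq_sum]
      simp
    have h2 : frobNorm A = 0 := by
      rw [frobNorm_eq_sum]
      simp
    rw [h1, h2, mul_zero]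
  · have hs : 0 ≤ s := le_trans (hdvec hd.some) (le_specNorm_diagonal dvec hdvec hd.some)
    rw [frobNorm_eq_sum, frobNorm_eq_sum]
    rw [show s * Real.sqrt (∑ i, ∑ j, (A i j) ^ 2)
        = Real.sqrt (s ^ 2 * ∑ i, ∑ j, (A i j) ^ 2) by
      rw [Real.sqrt_mul (sq_nonneg s), Real.sqrt_sq hs]]
    apply Real.sqrt_le_sqrt
    rw [Finset.mul_sum]
    apply Finset.sum_le_sum
    intro i _
    rw [Finset.mul_sum]
    apply Finset.sum_le_sum
    intro j _
    rw [Matrix.mul_diagonal, mul_pow]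
    have hj : dvec j ≤ s := le_specNorm_diagonal dvec hdvec j
    have hj0 := hdvec j
    have hsq : dvec j ^ 2 ≤ s ^ 2 := pow_le_pow_left₀ hj0 hj 2
    nlinarith [sq_nonneg (A i j), hsq]

/-- Let `Σ = VDVᵀ` with `V` a `p×d` matrix with orthonormal columns and
`D` diagonal with nonnegative entries. For `S ⊆ {1,...,p}` and `Σ_S = J_S Σ J_S`,
`‖Σ − Σ_S‖_F ≤ 2‖D‖₂‖J_S V − V‖_F`. -/
theorem frobNorm_sub_indicator_conj_le (p d : ℕ)
    (V : Matrix (Fin p) (Fin d) ℝ) (hV : Vᵀ * V = 1)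
    (dvec : Fin d → ℝ) (hdvec : ∀ i, 0 ≤ dvec i) (S : Finset (Fin p)) :
    frobNorm (V * Matrix.diagonal dvec * Vᵀ -
        indicatorMatrix S * (V * Matrix.diagonal dvec * Vᵀ) * indicatorMatrix S)
      ≤ 2 * specNorm (Matrix.diagonal dvec) * frobNorm (indicatorMatrix S * V - V) := by
  set J := indicatorMatrix S with hJ
  set D := Matrix.diagonal dvec with hD
  set Sg := V * D * Vᵀ with hSg
  set A := J * V - V with hA
  have hJT : Jᵀ = J := by
    rw [hJ, indicatorMatrix, Matrix.diagonal_transpose]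
  -- decomposition
  have hdecomp : Sg - J * Sg * J = (Sg - J * Sg) + (J * Sg - J * Sg * J) := by
    noncomm_ring
  have h1 : Sg - J * Sg = -(A * D * Vᵀ) := by
    rw [hA, hSg, Matrix.sub_mul, Matrix.sub_mul, neg_sub]
    simp only [Matrix.mul_assoc]
  have h2 : J * Sg - J * Sg * J = -(J * (V * D * Aᵀ)) := by
    rw [hA, Matrix.transpose_sub, Matrix.transpose_mul, hJT, hSg,
      Matrix.mul_sub, Matrix.mul_sub, neg_sub]
    simp only [Matrix.mul_assoc]
  have b1 : frobNorm (Sg - J * Sg) ≤ specNorm D * frobNorm A := by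
    rw [h1, frobNorm_neg, frobNorm_mul_orthT _ V hV]
    exact frobNorm_mul_diagonal_le A dvec hdvec
  have b2 : frobNorm (J * Sg - J * Sg * J) ≤ specNorm D * frobNorm A := by
    rw [h2, frobNorm_neg]
    calc frobNorm (J * (V * D * Aᵀ)) ≤ frobNorm (V * D * Aᵀ) :=
          frobNorm_indicator_mul_le S _
      _ = frobNorm (V * (D * Aᵀ)) := by rw [Matrix.mul_assoc]
      _ = frobNorm (D * Aᵀ) := frobNorm_orth_mul _ V hV
      _ = frobNorm ((D * Aᵀ)ᵀ) := (frobNorm_transpose _).symm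
      _ = frobNorm (A * D) := by
          rw [Matrix.transpose_mul, Matrix.transpose_transpose, hD,
            Matrix.diagonal_transpose]
      _ ≤ specNorm D * frobNorm A := frobNorm_mul_diagonal_le A dvec hdvec
  calc frobNorm (Sg - J * Sg * J)
      = frobNorm ((Sg - J * Sg) + (J * Sg - J * Sg * J)) := by rw [← hdecomp]
    _ ≤ frobNorm (Sg - J * Sg) + frobNorm (J * Sg - J * Sg * J) := frobNorm_add_le _ _
    _ ≤ specNorm D * frobNorm A + specNorm D * frobNorm A := add_le_add b1 b2
    _ = 2 * specNorm D * frobNorm A := by ring
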